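/- Let H be a separable infinite-dimensional complex Hilbert space and let ν be a function from the closed subsets of ℝ to the closed subspaces of H satisfying: (O1) ν(∅) = ⊥ and ν(ℝ) = ⊤; (O2) for every decreasing sequence (C_n) of closed subsets of ℝ (C_{n+1} ⊆ C_n for all n), ν(⋂_n C_n) is the intersection of the closed subspaces ν(C_n); (O3) for every unit vector x ∈ H and all closed subsets A, B of ℝ, ν_x(A) + ν_x(B) = ν_x(A ∪ B) + ν_x(A ∩ B), where ν_x(C) = re⟪x, proj_{ν(C)} x⟫. Then there exists a unique observable o on H such that o(C) = ν(C) for every closed subset C of ℝ. -/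

import Mathlib

open scoped InnerProductSpace

noncomputable section

variable {H : Type*} [NormedAddCommGroup H] [InnerProductSpace ℂ H] [CompleteSpace H]

/-- The type of closed subspaces of a complex inner product space `H`. -/
abbrev ClosedSubspace (H : Type*) [NormedAddCommGroup H] [InnerProductSpace ℂ H] :=
  {P : Submodule ℂ H // IsClosed (P : Set H)}

/-- The trivial closed subspace `{0}`. -/
def csBot : ClosedSubspace H :=
  ⟨⊥, by rw [Submodule.bot_coe]; exact isClosed_singleton⟩

/-- The total closed subspace `H`. -/
def csTop : ClosedSubspace H :=
  ⟨⊤, by rw [Submodule.top_coe]; exact isClosed_univ⟩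

/-- Orthogonal projection onto a closed subspace, as a map `H → H`. -/
noncomputable def cproj (P : ClosedSubspace H) (x : H) : H :=
  letI : CompleteSpace P.1 := P.2.completeSpace_coe
  (P.1.orthogonalProjectionOnto x : H)

/-- Two subspaces are orthogonal: every vector of one is orthogonal to every
vector of the other. -/
def OrthoSub (P Q : Submodule ℂ H) : Prop :=
  ∀ x ∈ P, ∀ y ∈ Q, ⟪x, y⟫_ℂ = 0

/-- A (quantum) state: a `[0,1]`-valued map on closed subspaces with `s ⊥ = 0`,
`s ⊤ = 1` which is countably additive on pairwise orthogonal families (where the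
"sup" of such a family is the topological closure of the lattice supremum). -/
def IsState (s : ClosedSubspace H → ℝ) : Prop :=
  (∀ P, s P ∈ Set.Icc (0 : ℝ) 1) ∧
  s csBot = 0 ∧ s csTop = 1 ∧
  ∀ P : ℕ → ClosedSubspace H, (∀ m n, m ≠ n → OrthoSub (P m).1 (P n).1) →
    s ⟨(⨆ n, (P n).1).topologicalClosure, Submodule.isClosed_topologicalClosure _⟩
      = ∑' n, s (P n)

/-- A (quantum) observable: a projector-valued measure on the Borel subsets of `ℝ`. -/
def IsObservable (o : {X : Set ℝ // MeasurableSet X} → ClosedSubspace H) : Prop :=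
  o ⟨∅, MeasurableSet.empty⟩ = csBot ∧
  o ⟨Set.univ, MeasurableSet.univ⟩ = csTop ∧
  (∀ X : ℕ → {X : Set ℝ // MeasurableSet X},
    o ⟨⋃ n, (X n).1, MeasurableSet.iUnion fun n => (X n).2⟩
      = ⟨(⨆ n, (o (X n)).1).topologicalClosure,
          Submodule.isClosed_topologicalClosure _⟩) ∧
  ∀ X Y : {X : Set ℝ // MeasurableSet X}, X.1 ∩ Y.1 = ∅ → OrthoSub (o X).1 (o Y).1

namespace QV


lemma cproj_def (P : ClosedSubspace H) (x : H) :
    letI : CompleteSpace P.1 := P.2.completeSpace_coe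
    cproj P x = (P.1.orthogonalProjectionOnto x : H) := rfl

lemma cproj_mem (P : ClosedSubspace H) (x : H) : cproj P x ∈ P.1 := by
  letI : CompleteSpace P.1 := P.2.completeSpace_coe
  exact (P.1.orthogonalProjectionOnto x).2

lemma cproj_eq_self (P : ClosedSubspace H) {x : H} (hx : x ∈ P.1) : cproj P x = x := by
  letI : CompleteSpace P.1 := P.2.completeSpace_coe
  exact Submodule.starProjection_eq_self_iff.2 hx

lemma sub_cproj_mem (P : ClosedSubspace H) (x : H) : x - cproj P x ∈ P.1ᗮ := by
  letI : CompleteSpace P.1 := P.2.completeSpace_coe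
  exact Submodule.sub_starProjection_mem_orthogonal x

lemma cproj_eq_zero (P : ClosedSubspace H) {x : H} (hx : x ∈ P.1ᗮ) : cproj P x = 0 := by
  letI : CompleteSpace P.1 := P.2.completeSpace_coe
  have := Submodule.orthogonalProjectionOnto_eq_zero_iff (K := P.1) (v := x)
  rw [cproj_def]
  rw [this.2 hx]
  rfl

lemma cproj_smul (P : ClosedSubspace H) (c : ℂ) (x : H) :
    cproj P (c • x) = c • cproj P x := by
  letI : CompleteSpace P.1 := P.2.completeSpace_coe
  rw [cproj_def, cproj_def, map_smul]
  rfl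

lemma cproj_add (P : ClosedSubspace H) (x y : H) :
    cproj P (x + y) = cproj P x + cproj P y := by
  letI : CompleteSpace P.1 := P.2.completeSpace_coe
  rw [cproj_def, cproj_def, cproj_def, map_add]
  rfl

lemma cproj_zero (P : ClosedSubspace H) : cproj P (0 : H) = 0 := by
  letI : CompleteSpace P.1 := P.2.completeSpace_coe
  rw [cproj_def, map_zero]
  rfl

lemma norm_cproj_le (P : ClosedSubspace H) (x : H) : ‖cproj P x‖ ≤ ‖x‖ := by
  letI : CompleteSpace P.1 := P.2.completeSpace_coe
  calc ‖cproj P x‖ = ‖P.1.orthogonalProjectionOnto x‖ := rfl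
    _ ≤ 1 * ‖x‖ := (P.1.orthogonalProjectionOnto).le_of_opNorm_le (Submodule.orthogonalProjectionOnto_norm_le P.1) x
    _ = ‖x‖ := one_mul _

lemma inner_cproj_self (P : ClosedSubspace H) (x : H) :
    (⟪x, cproj P x⟫_ℂ).re = ‖cproj P x‖ ^ 2 := by
  have h : ⟪x - cproj P x, cproj P x⟫_ℂ = 0 :=
    (Submodule.mem_orthogonal' _ _).1 (sub_cproj_mem P x) _ (cproj_mem P x)
  have : ⟪x, cproj P x⟫_ℂ = ⟪cproj P x, cproj P x⟫_ℂ := by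
    have := inner_sub_left (𝕜 := ℂ) x (cproj P x) (cproj P x)
    rw [h] at this
    linear_combination -this
  rw [this]
  have h2 := inner_self_eq_norm_sq (𝕜 := ℂ) (cproj P x)
  simpa [RCLike.re_to_complex] using h2

lemma inner_cproj_left_right (P : ClosedSubspace H) (x y : H) :
    ⟪cproj P x, y⟫_ℂ = ⟪x, cproj P y⟫_ℂ := by
  letI : CompleteSpace P.1 := P.2.completeSpace_coe
  exact Submodule.inner_starProjection_left_eq_right P.1 x y

lemma cproj_cproj (P Q : ClosedSubspace H) (h : P.1 ≤ Q.1) (x : H) :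
    cproj P (cproj Q x) = cproj P x := by
  letI : CompleteSpace P.1 := P.2.completeSpace_coe
  letI : CompleteSpace Q.1 := Q.2.completeSpace_coe
  have := Submodule.orthogonalProjectionOnto_starProjection_of_le h x
  calc cproj P (cproj Q x) = (P.1.orthogonalProjectionOnto (Q.1.starProjection x) : H) := rfl
    _ = (P.1.orthogonalProjectionOnto x : H) := by rw [this]
    _ = cproj P x := rfl

lemma norm_cproj_mono (P Q : ClosedSubspace H) (h : P.1 ≤ Q.1) (x : H) :
    ‖cproj P x‖ ≤ ‖cproj Q x‖ := by
  rw [← cproj_cproj P Q h x]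
  exact norm_cproj_le P _

lemma cproj_csBot (x : H) : cproj (csBot : ClosedSubspace H) x = 0 := by
  have := cproj_mem (csBot : ClosedSubspace H) x
  simpa [csBot] using this




lemma tendsto_cproj_iInf (Q : ℕ → ClosedSubspace H) (hdec : ∀ n, (Q (n + 1)).1 ≤ (Q n).1)
    (R : ClosedSubspace H) (hR : R.1 = ⨅ n, (Q n).1) (x : H) :
    Filter.Tendsto (fun n => cproj (Q n) x) Filter.atTop (nhds (cproj R x)) := by
  have hant : Antitone fun n => (Q n).1 := antitone_nat_of_succ_le hdec
  set y : ℕ → H := fun n => cproj (Q n) x with hy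
  have hyn : ∀ {m n : ℕ}, m ≤ n → y n = cproj (Q n) (y m) := by
    intro m n h
    exact (cproj_cproj _ _ (hant h) x).symm
  have hpyth : ∀ {m n : ℕ}, m ≤ n → ‖y m - y n‖ ^ 2 = ‖y m‖ ^ 2 - ‖y n‖ ^ 2 := by
    intro m n h
    have h1 : y n = cproj (Q n) (y m) := hyn h
    have h2 : ⟪y m - y n, y n⟫_ℂ = 0 := by
      conv_lhs => rw [h1]
      exact (Submodule.mem_orthogonal' _ _).1 (h1 ▸ sub_cproj_mem (Q n) (y m)) _ (cproj_mem _ _)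
    have h3 := norm_add_sq (𝕜 := ℂ) (y m - y n) (y n)
    rw [sub_add_cancel, h2] at h3
    simp only [map_zero, mul_zero, add_zero] at h3
    linarith
  have hgant : Antitone fun n => ‖y n‖ ^ 2 := by
    intro m n h
    have := hpyth h
    show ‖y n‖ ^ 2 ≤ ‖y m‖ ^ 2
    nlinarith [sq_nonneg ‖y m - y n‖]
  have hgbdd : BddBelow (Set.range fun n => ‖y n‖ ^ 2) :=
    ⟨0, by rintro r ⟨n, rfl⟩; positivity⟩
  have hgc : CauchySeq fun n => ‖y n‖ ^ 2 :=
    (tendsto_atTop_ciInf hgant hgbdd).cauchySeq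
  have hyc : CauchySeq y := by
    rw [Metric.cauchySeq_iff] at hgc ⊢
    intro ε hε
    obtain ⟨N, hN⟩ := hgc (ε ^ 2) (by positivity)
    refine ⟨N, fun m hm n hn => ?_⟩
    have key : ∀ {a b : ℕ}, a ≤ b → N ≤ a → N ≤ b → dist (y a) (y b) < ε := by
      intro a b hab ha hb
      have h1 := hN a ha b hb
      rw [Real.dist_eq] at h1
      have h2 : ‖y a - y b‖ ^ 2 < ε ^ 2 := by
        rw [hpyth hab]
        calc ‖y a‖ ^ 2 - ‖y b‖ ^ 2 ≤ |‖y a‖ ^ 2 - ‖y b‖ ^ 2| := le_abs_self _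
          _ < ε ^ 2 := h1
      rw [dist_eq_norm]
      nlinarith [norm_nonneg (y a - y b)]
    rcases le_total m n with h | h
    · exact key h hm hn
    · rw [dist_comm]; exact key h hn hm
  obtain ⟨z, hz⟩ := cauchySeq_tendsto_of_complete hyc
  have hzmem : z ∈ R.1 := by
    rw [hR, Submodule.mem_iInf]
    intro m
    refine (Q m).2.mem_of_tendsto hz (Filter.eventually_atTop.2 ⟨m, fun n hn => ?_⟩)
    exact hant hn (cproj_mem (Q n) x)
  have horth : x - z ∈ R.1ᗮ := by
    rw [Submodule.mem_orthogonal]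
    intro u hu
    have hun : ∀ n, ⟪u, x - y n⟫_ℂ = 0 := by
      intro n
      have hu' : u ∈ (Q n).1 := by
        rw [hR, Submodule.mem_iInf] at hu
        exact hu n
      exact (Submodule.mem_orthogonal _ _).1 (sub_cproj_mem (Q n) x) u hu'
    have ht : Filter.Tendsto (fun n => ⟪u, x - y n⟫_ℂ) Filter.atTop (nhds ⟪u, x - z⟫_ℂ) :=
      Filter.Tendsto.inner tendsto_const_nhds (tendsto_const_nhds.sub hz)
    have ht0 : Filter.Tendsto (fun n => ⟪u, x - y n⟫_ℂ) Filter.atTop (nhds 0) := by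
      simp only [hun]; exact tendsto_const_nhds
    exact tendsto_nhds_unique ht ht0
  have : cproj R x = z := by
    letI : CompleteSpace R.1 := R.2.completeSpace_coe
    exact Submodule.eq_starProjection_of_mem_orthogonal hzmem horth
  rw [this]
  exact hz

section NuLayer
open MeasureTheory TopologicalSpace
open scoped NNReal ENNReal

variable (ν : {C : Set ℝ // IsClosed C} → ClosedSubspace H)

/-- Condition (O1). -/
def O1Prop : Prop :=
  ν ⟨∅, isClosed_empty⟩ = csBot ∧ ν ⟨Set.univ, isClosed_univ⟩ = csTop

/-- Condition (O2). -/
def O2Prop : Prop :=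
  ∀ C : ℕ → {C : Set ℝ // IsClosed C}, (∀ n, (C (n + 1)).1 ⊆ (C n).1) →
    ν ⟨⋂ n, (C n).1, isClosed_iInter fun n => (C n).2⟩
      = ⟨⨅ n, (ν (C n)).1, by
          rw [Submodule.coe_iInf]; exact isClosed_iInter fun n => (ν (C n)).2⟩

/-- Condition (O3). -/
def O3Prop : Prop :=
  ∀ x : H, ‖x‖ = 1 → ∀ A B : {C : Set ℝ // IsClosed C},
    (⟪x, cproj (ν A) x⟫_ℂ).re + (⟪x, cproj (ν B) x⟫_ℂ).re
    = (⟪x, cproj (ν ⟨A.1 ∪ B.1, A.2.union B.2⟩) x⟫_ℂ).re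
      + (⟪x, cproj (ν ⟨A.1 ∩ B.1, A.2.inter B.2⟩) x⟫_ℂ).re

lemma nu_mono (h2 : O2Prop ν) {A B : Set ℝ} (hA : IsClosed A) (hB : IsClosed B)
    (hAB : A ⊆ B) : (ν ⟨A, hA⟩).1 ≤ (ν ⟨B, hB⟩).1 := by
  set C : ℕ → {C : Set ℝ // IsClosed C} :=
    fun n => Nat.rec ⟨B, hB⟩ (fun _ _ => ⟨A, hA⟩) n with hC
  have hdec : ∀ n, (C (n + 1)).1 ⊆ (C n).1 := by
    intro n
    cases n with
    | zero => exact hAB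
    | succ n => exact subset_rfl
  have hint : ⋂ n, (C n).1 = A := by
    apply Set.Subset.antisymm
    · exact Set.iInter_subset_of_subset 1 subset_rfl
    · refine Set.subset_iInter fun n => ?_
      cases n with
      | zero => exact hAB
      | succ n => exact subset_rfl
  have h := h2 C hdec
  have he : (⟨⋂ n, (C n).1, isClosed_iInter fun n => (C n).2⟩ : {C : Set ℝ // IsClosed C})
      = ⟨A, hA⟩ := Subtype.ext hint
  rw [he] at h
  have hval := congrArg Subtype.val h
  simp only at hval
  rw [hval]
  exact iInf_le (fun n => (ν (C n)).1) 0

lemma F_modular (h3 : O3Prop ν) (x : H) (A B : {C : Set ℝ // IsClosed C}) :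
    ‖cproj (ν ⟨A.1 ∪ B.1, A.2.union B.2⟩) x‖ ^ 2
      + ‖cproj (ν ⟨A.1 ∩ B.1, A.2.inter B.2⟩) x‖ ^ 2
    = ‖cproj (ν A) x‖ ^ 2 + ‖cproj (ν B) x‖ ^ 2 := by
  rcases eq_or_ne x 0 with rfl | hx
  · simp only [cproj_zero, norm_zero]
  · have hnx : (0 : ℝ) < ‖x‖ := norm_pos_iff.2 hx
    set c : ℂ := (‖x‖ : ℂ) with hc
    have hcne : c ≠ 0 := by
      simp [hc, Complex.ofReal_ne_zero, ne_of_gt hnx]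
    set u : H := c⁻¹ • x with hu
    have hxu : x = c • u := by
      rw [hu, smul_smul, mul_inv_cancel₀ hcne, one_smul]
    have hnu : ‖u‖ = 1 := by
      rw [hu, norm_smul, norm_inv]
      simp only [hc, Complex.norm_real, Real.norm_eq_abs, abs_of_pos hnx]
      field_simp
    have key : ∀ P : ClosedSubspace H, ‖cproj P x‖ ^ 2 = ‖x‖ ^ 2 * ‖cproj P u‖ ^ 2 := by
      intro P
      conv_lhs => rw [hxu, cproj_smul, norm_smul]
      simp only [hc, Complex.norm_real, Real.norm_eq_abs, abs_of_pos hnx]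
      ring
    have h := h3 u hnu A B
    rw [inner_cproj_self, inner_cproj_self, inner_cproj_self, inner_cproj_self] at h
    rw [key, key, key, key]
    nlinarith [h]

lemma F_empty (h1 : O1Prop ν) (x : H) {E : Set ℝ} (hE : IsClosed E) (hEe : E = ∅) :
    cproj (ν ⟨E, hE⟩) x = 0 := by
  have : (⟨E, hE⟩ : {C : Set ℝ // IsClosed C}) = ⟨∅, isClosed_empty⟩ := Subtype.ext hEe
  rw [this, h1.1, cproj_csBot]

lemma F_union_disjoint (h1 : O1Prop ν) (h3 : O3Prop ν) (x : H) {A B : Set ℝ}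
    (hA : IsClosed A) (hB : IsClosed B) (hd : A ∩ B = ∅) :
    ‖cproj (ν ⟨A ∪ B, hA.union hB⟩) x‖ ^ 2
      = ‖cproj (ν ⟨A, hA⟩) x‖ ^ 2 + ‖cproj (ν ⟨B, hB⟩) x‖ ^ 2 := by
  have h := F_modular ν h3 x ⟨A, hA⟩ ⟨B, hB⟩
  have hz : cproj (ν ⟨(⟨A, hA⟩ : {C : Set ℝ // IsClosed C}).1 ∩ (⟨B, hB⟩ :
      {C : Set ℝ // IsClosed C}).1, hA.inter hB⟩) x = 0 :=
    F_empty ν h1 x _ hd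
  rw [hz] at h
  simpa using h

lemma F_subadd (h3 : O3Prop ν) (x : H) {A B : Set ℝ} (hA : IsClosed A) (hB : IsClosed B) :
    ‖cproj (ν ⟨A ∪ B, hA.union hB⟩) x‖ ^ 2
      ≤ ‖cproj (ν ⟨A, hA⟩) x‖ ^ 2 + ‖cproj (ν ⟨B, hB⟩) x‖ ^ 2 := by
  have h := F_modular ν h3 x ⟨A, hA⟩ ⟨B, hB⟩
  nlinarith [sq_nonneg ‖cproj (ν ⟨(⟨A, hA⟩ : {C : Set ℝ // IsClosed C}).1 ∩ (⟨B, hB⟩ :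
    {C : Set ℝ // IsClosed C}).1, hA.inter hB⟩) x‖]

lemma nu_orth (h1 : O1Prop ν) (h3 : O3Prop ν) (A B : {C : Set ℝ // IsClosed C})
    (h : A.1 ∩ B.1 = ∅) : OrthoSub (ν A).1 (ν B).1 := by
  intro a ha b hb
  have h1' := F_union_disjoint ν h1 h3 a A.2 B.2 h
  have h2 : cproj (ν ⟨A.1, A.2⟩) a = a := cproj_eq_self _ ha
  have h3' : ‖cproj (ν ⟨A.1 ∪ B.1, A.2.union B.2⟩) a‖ ≤ ‖a‖ := norm_cproj_le _ _
  have h4 : cproj (ν ⟨B.1, B.2⟩) a = 0 := by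
    have : ‖cproj (ν ⟨B.1, B.2⟩) a‖ ^ 2 ≤ 0 := by
      rw [h2] at h1'
      nlinarith [norm_nonneg (cproj (ν ⟨A.1 ∪ B.1, A.2.union B.2⟩) a), norm_nonneg a]
    have h5 : ‖cproj (ν ⟨B.1, B.2⟩) a‖ = 0 := by nlinarith [norm_nonneg (cproj (ν ⟨B.1, B.2⟩) a)]
    exact norm_eq_zero.1 h5
  have h5 : a ∈ (ν ⟨B.1, B.2⟩).1ᗮ := by
    have := sub_cproj_mem (ν ⟨B.1, B.2⟩) a
    rwa [h4, sub_zero] at this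
  exact (Submodule.mem_orthogonal' _ _).1 h5 b hb

/-- The content associated to `ν` and a vector `x`. -/
noncomputable def nuContent (h1 : O1Prop ν) (h3 : O3Prop ν) (hm : ∀ {A B : Set ℝ}
    (hA : IsClosed A) (hB : IsClosed B), A ⊆ B → (ν ⟨A, hA⟩).1 ≤ (ν ⟨B, hB⟩).1)
    (x : H) : Content ℝ where
  toFun K := Real.toNNReal (‖cproj (ν ⟨K.1, K.2.isClosed⟩) x‖ ^ 2)
  mono' K₁ K₂ h := by
    have h' := norm_cproj_mono _ _ (hm K₁.2.isClosed K₂.2.isClosed h) x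
    exact Real.toNNReal_mono (by nlinarith [norm_nonneg (cproj (ν ⟨K₁.1, K₁.2.isClosed⟩) x)])
  sup_disjoint' K₁ K₂ hdisj _ _ := by
    have he : ((K₁ ⊔ K₂ : Compacts ℝ).1 : Set ℝ) = K₁.1 ∪ K₂.1 := rfl
    have hKK : (⟨(K₁ ⊔ K₂ : Compacts ℝ).1, (K₁ ⊔ K₂ : Compacts ℝ).2.isClosed⟩ :
        {C : Set ℝ // IsClosed C}) = ⟨K₁.1 ∪ K₂.1, K₁.2.isClosed.union K₂.2.isClosed⟩ :=
      Subtype.ext he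
    rw [hKK, F_union_disjoint ν h1 h3 x K₁.2.isClosed K₂.2.isClosed
      (Set.disjoint_iff_inter_eq_empty.1 hdisj)]
    rw [Real.toNNReal_add (by positivity) (by positivity)]
  sup_le' K₁ K₂ := by
    have he : ((K₁ ⊔ K₂ : Compacts ℝ).1 : Set ℝ) = K₁.1 ∪ K₂.1 := rfl
    have hKK : (⟨(K₁ ⊔ K₂ : Compacts ℝ).1, (K₁ ⊔ K₂ : Compacts ℝ).2.isClosed⟩ :
        {C : Set ℝ // IsClosed C}) = ⟨K₁.1 ∪ K₂.1, K₁.2.isClosed.union K₂.2.isClosed⟩ :=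
      Subtype.ext he
    rw [hKK]
    calc Real.toNNReal (‖cproj (ν ⟨K₁.1 ∪ K₂.1, K₁.2.isClosed.union K₂.2.isClosed⟩) x‖ ^ 2)
        ≤ Real.toNNReal (‖cproj (ν ⟨K₁.1, K₁.2.isClosed⟩) x‖ ^ 2
            + ‖cproj (ν ⟨K₂.1, K₂.2.isClosed⟩) x‖ ^ 2) :=
          Real.toNNReal_mono (F_subadd ν h3 x K₁.2.isClosed K₂.2.isClosed)
      _ = _ := Real.toNNReal_add (by positivity) (by positivity)

/-- Norm-squared of projections along a decreasing sequence of closed sets converges. -/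
lemma F_tendsto_iInter (h2 : O2Prop ν) (D : ℕ → Set ℝ) (hDc : ∀ n, IsClosed (D n))
    (hdec : ∀ n, D (n + 1) ⊆ D n) (x : H) :
    Filter.Tendsto (fun n => ‖cproj (ν ⟨D n, hDc n⟩) x‖ ^ 2) Filter.atTop
      (nhds (‖cproj (ν ⟨⋂ n, D n, isClosed_iInter hDc⟩) x‖ ^ 2)) := by
  set C : ℕ → {C : Set ℝ // IsClosed C} := fun n => ⟨D n, hDc n⟩ with hC
  have h := h2 C hdec
  have hval := congrArg Subtype.val h
  simp only at hval
  have htd := tendsto_cproj_iInf (fun n => ν (C n))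
    (fun n => nu_mono ν h2 (hDc (n + 1)) (hDc n) (hdec n))
    (ν ⟨⋂ n, D n, isClosed_iInter hDc⟩) hval x
  exact ((continuous_pow 2).tendsto _).comp (htd.norm)

lemma nuContent_regular (h1 : O1Prop ν) (h2 : O2Prop ν) (h3 : O3Prop ν) (x : H) :
    (nuContent ν h1 h3 (fun hA hB h => nu_mono ν h2 hA hB h) x).ContentRegular := by
  set μc := nuContent ν h1 h3 (fun hA hB h => nu_mono ν h2 hA hB h) x with hμc
  intro K
  apply le_antisymm
  · refine le_iInf fun K' => le_iInf fun hK' => ?_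
    exact μc.mono K K' (hK'.trans interior_subset)
  · set D : ℕ → Set ℝ := fun n => Metric.cthickening (1 / (n + 1)) K.1 with hD
    have hDc : ∀ n, IsClosed (D n) := fun n => Metric.isClosed_cthickening
    have hDcpt : ∀ n, IsCompact (D n) := fun n => K.2.cthickening
    have hdec : ∀ n, D (n + 1) ⊆ D n := by
      intro n
      apply Metric.cthickening_mono
      apply div_le_div_of_nonneg_left (by norm_num) (by positivity)
      · push_cast; linarith
    have hint : ⋂ n, D n = K.1 := by
      have hcl := Metric.closure_eq_iInter_cthickening' K.1
        (Set.range fun n : ℕ => 1 / ((n : ℝ) + 1)) (by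
          intro ε hε
          obtain ⟨n, hn⟩ := exists_nat_one_div_lt hε
          exact ⟨1 / ((n : ℝ) + 1), ⟨n, rfl⟩, ⟨by positivity, le_of_lt hn⟩⟩)
      rw [K.2.isClosed.closure_eq, Set.biInter_range] at hcl
      exact hcl.symm
    have htd := F_tendsto_iInter ν h2 D hDc hdec x
    refine ENNReal.le_of_forall_pos_le_add fun ε hε _ => ?_
    have hεr : (0 : ℝ) < ε := hε
    rw [Metric.tendsto_atTop] at htd
    obtain ⟨N, hN⟩ := htd ε hεr
    have hNlt := hN N le_rfl
    rw [Real.dist_eq] at hNlt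
    have hsub : K.1 ⊆ interior (D N) := by
      have t1 : K.1 ⊆ Metric.thickening (1 / ((N : ℝ) + 1)) K.1 :=
        Metric.self_subset_thickening (by positivity) _
      have t2 : Metric.thickening (1 / ((N : ℝ) + 1)) K.1 ⊆ interior (D N) :=
        interior_maximal (Metric.thickening_subset_cthickening _ _) Metric.isOpen_thickening
      exact t1.trans t2
    refine le_trans (iInf_le_of_le ⟨D N, hDcpt N⟩ (iInf_le_of_le hsub le_rfl)) ?_
    have hKi : (⟨⋂ n, D n, isClosed_iInter hDc⟩ : {C : Set ℝ // IsClosed C})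
        = ⟨K.1, K.2.isClosed⟩ := Subtype.ext hint
    rw [hKi] at hNlt
    have hle : Real.toNNReal (‖cproj (ν ⟨D N, hDc N⟩) x‖ ^ 2)
        ≤ Real.toNNReal (‖cproj (ν ⟨K.1, K.2.isClosed⟩) x‖ ^ 2) + ε := by
      have hrw : Real.toNNReal (‖cproj (ν ⟨K.1, K.2.isClosed⟩) x‖ ^ 2) + ε
          = Real.toNNReal (‖cproj (ν ⟨K.1, K.2.isClosed⟩) x‖ ^ 2 + (ε : ℝ)) := by
        rw [Real.toNNReal_add (by positivity) ε.coe_nonneg, Real.toNNReal_coe]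
      rw [hrw]
      refine Real.toNNReal_mono ?_
      have habs := abs_lt.1 hNlt
      linarith [habs.1, habs.2]
    calc (μc ⟨D N, hDcpt N⟩ : ℝ≥0∞)
        = (Real.toNNReal (‖cproj (ν ⟨D N, hDc N⟩) x‖ ^ 2) : ℝ≥0∞) := rfl
      _ ≤ ((Real.toNNReal (‖cproj (ν ⟨K.1, K.2.isClosed⟩) x‖ ^ 2) + ε : ℝ≥0) : ℝ≥0∞) := by
          exact_mod_cast ENNReal.coe_le_coe.2 hle
      _ = (μc K : ℝ≥0∞) + (ε : ℝ≥0∞) := by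
          rw [ENNReal.coe_add]
          rfl

/-- The Borel measure on `ℝ` associated to `ν` and a vector `x`. -/
noncomputable def nuMeas (h1 : O1Prop ν) (h2 : O2Prop ν) (h3 : O3Prop ν) (x : H) : Measure ℝ :=
  (nuContent ν h1 h3 (fun hA hB h => nu_mono ν h2 hA hB h) x).measure

lemma nuMeas_compact (h1 : O1Prop ν) (h2 : O2Prop ν) (h3 : O3Prop ν) (x : H)
    (K : Compacts ℝ) :
    nuMeas ν h1 h2 h3 x K.1 = ENNReal.ofReal (‖cproj (ν ⟨K.1, K.2.isClosed⟩) x‖ ^ 2) :=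
  Content.measure_eq_content_of_regular _ (nuContent_regular ν h1 h2 h3 x) K

lemma nuMeas_closed (h1 : O1Prop ν) (h2 : O2Prop ν) (h3 : O3Prop ν) (x : H)
    {C : Set ℝ} (hC : IsClosed C) :
    nuMeas ν h1 h2 h3 x C = ENNReal.ofReal (‖cproj (ν ⟨C, hC⟩) x‖ ^ 2) := by
  set K : ℕ → Set ℝ := fun n => C ∩ Set.Icc (-(n : ℝ)) n with hK
  have hKcpt : ∀ n, IsCompact (K n) := fun n => isCompact_Icc.inter_left hC
  have hKc : ∀ n, IsClosed (K n) := fun n => (hKcpt n).isClosed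
  have hKmono : Monotone K := by
    intro m n hmn
    refine Set.inter_subset_inter_right _ (Set.Icc_subset_Icc ?_ ?_) <;>
      · push_cast; norm_num; exact_mod_cast hmn
  have hKun : ⋃ n, K n = C := by
    apply Set.Subset.antisymm
    · exact Set.iUnion_subset fun n => Set.inter_subset_left
    · intro t ht
      obtain ⟨n, hn⟩ := exists_nat_ge |t|
      exact Set.mem_iUnion.2 ⟨n, ht, (abs_le.1 hn).1, (abs_le.1 hn).2⟩
  have hμtd := tendsto_measure_iUnion_atTop (μ := nuMeas ν h1 h2 h3 x) hKmono
  rw [hKun] at hμtd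
  -- the sequence of measures of the `K n`
  have hμK : ∀ n, nuMeas ν h1 h2 h3 x (K n)
      = ENNReal.ofReal (‖cproj (ν ⟨K n, hKc n⟩) x‖ ^ 2) := by
    intro n
    exact nuMeas_compact ν h1 h2 h3 x ⟨K n, hKcpt n⟩
  -- the complementary closed pieces
  set D : ℕ → Set ℝ := fun n => C ∩ {t : ℝ | (n : ℝ) ≤ |t|} with hD
  have hDc : ∀ n, IsClosed (D n) :=
    fun n => hC.inter (isClosed_le continuous_const continuous_abs)
  have hDdec : ∀ n, D (n + 1) ⊆ D n := by
    intro n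
    refine Set.inter_subset_inter_right _ fun t ht => ?_
    simp only [Set.mem_setOf_eq] at ht ⊢
    push_cast at ht ⊢
    linarith
  have hDint : ⋂ n, D n = ∅ := by
    apply Set.eq_empty_of_forall_notMem
    intro t ht
    obtain ⟨n, hn⟩ := exists_nat_gt |t|
    have := (Set.mem_iInter.1 ht n).2
    simp only [Set.mem_setOf_eq] at this
    linarith
  have hDtd := F_tendsto_iInter ν h2 D hDc hDdec x
  have hD0 : cproj (ν ⟨⋂ n, D n, isClosed_iInter hDc⟩) x = 0 :=
    F_empty ν h1 x _ hDint
  rw [hD0, norm_zero] at hDtd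
  simp only [ne_eq, OfNat.ofNat_ne_zero, not_false_eq_true, zero_pow] at hDtd
  -- squeeze: F (K n) → F C
  have hcover : ∀ n, ‖cproj (ν ⟨C, hC⟩) x‖ ^ 2
      ≤ ‖cproj (ν ⟨K n, hKc n⟩) x‖ ^ 2 + ‖cproj (ν ⟨D n, hDc n⟩) x‖ ^ 2 := by
    intro n
    have hun : K n ∪ D n = C := by
      apply Set.Subset.antisymm
      · exact Set.union_subset Set.inter_subset_left Set.inter_subset_left
      · intro t ht
        rcases le_total |t| n with h | h
        · exact Or.inl ⟨ht, (abs_le.1 h).1, (abs_le.1 h).2⟩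
        · exact Or.inr ⟨ht, h⟩
    have hsub := F_subadd ν h3 x (hKc n) (hDc n)
    have he : (⟨K n ∪ D n, (hKc n).union (hDc n)⟩ : {C : Set ℝ // IsClosed C}) = ⟨C, hC⟩ :=
      Subtype.ext hun
    rwa [he] at hsub
  have hlef : ∀ n, ‖cproj (ν ⟨K n, hKc n⟩) x‖ ^ 2 ≤ ‖cproj (ν ⟨C, hC⟩) x‖ ^ 2 := by
    intro n
    have hmono := norm_cproj_mono _ _ (nu_mono ν h2 (hKc n) hC Set.inter_subset_left) x
    nlinarith [norm_nonneg (cproj (ν ⟨K n, hKc n⟩) x)]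
  have hFtd : Filter.Tendsto (fun n => ‖cproj (ν ⟨K n, hKc n⟩) x‖ ^ 2) Filter.atTop
      (nhds (‖cproj (ν ⟨C, hC⟩) x‖ ^ 2)) := by
    have hlow : Filter.Tendsto
        (fun n => ‖cproj (ν ⟨C, hC⟩) x‖ ^ 2 - ‖cproj (ν ⟨D n, hDc n⟩) x‖ ^ 2) Filter.atTop
        (nhds (‖cproj (ν ⟨C, hC⟩) x‖ ^ 2)) := by
      simpa using Filter.Tendsto.sub
        (tendsto_const_nhds (x := ‖cproj (ν ⟨C, hC⟩) x‖ ^ 2) (f := Filter.atTop (α := ℕ))) hDtd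
    refine tendsto_of_tendsto_of_tendsto_of_le_of_le hlow tendsto_const_nhds ?_ ?_
    · intro n
      have h := hcover n
      show ‖cproj (ν ⟨C, hC⟩) x‖ ^ 2 - ‖cproj (ν ⟨D n, hDc n⟩) x‖ ^ 2
        ≤ ‖cproj (ν ⟨K n, hKc n⟩) x‖ ^ 2
      linarith
    · exact hlef
  -- pass to `ℝ≥0∞`
  have hμtd2 : Filter.Tendsto (fun n => nuMeas ν h1 h2 h3 x (K n)) Filter.atTop
      (nhds (ENNReal.ofReal (‖cproj (ν ⟨C, hC⟩) x‖ ^ 2))) := by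
    simp only [hμK]
    exact (ENNReal.continuous_ofReal.tendsto _).comp hFtd
  exact tendsto_nhds_unique hμtd hμtd2

lemma nuMeas_isFiniteMeasure (h1 : O1Prop ν) (h2 : O2Prop ν) (h3 : O3Prop ν) (x : H) :
    IsFiniteMeasure (nuMeas ν h1 h2 h3 x) := by
  constructor
  rw [nuMeas_closed ν h1 h2 h3 x isClosed_univ]
  exact ENNReal.ofReal_lt_top

lemma orthoSub_of_le_orthogonal {P Q : Submodule ℂ H} (h : Q ≤ Pᗮ) : OrthoSub P Q :=
  fun a ha b hb => (Submodule.mem_orthogonal P b).1 (h hb) a ha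

/-- The candidate observable: interior regularization of `ν`. -/
noncomputable def qObs (X : {X : Set ℝ // MeasurableSet X}) : ClosedSubspace H :=
  ⟨(⨆ (C : Set ℝ) (hC : IsClosed C) (_ : C ⊆ X.1), (ν ⟨C, hC⟩).1).topologicalClosure,
    Submodule.isClosed_topologicalClosure _⟩

lemma qObs_val (X : {X : Set ℝ // MeasurableSet X}) :
    (qObs ν X).1
      = (⨆ (C : Set ℝ) (hC : IsClosed C) (_ : C ⊆ X.1), (ν ⟨C, hC⟩).1).topologicalClosure :=
  rfl

lemma qObs_closed (h2 : O2Prop ν) (C : {C : Set ℝ // IsClosed C}) :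
    qObs ν ⟨C.1, C.2.measurableSet⟩ = ν C := by
  apply Subtype.ext
  rw [qObs_val]
  apply le_antisymm
  · refine Submodule.topologicalClosure_minimal _ ?_ (ν C).2
    refine iSup_le fun D => iSup_le fun hD => iSup_le fun hsub => ?_
    exact nu_mono ν h2 hD C.2 hsub
  · refine le_trans ?_ (Submodule.le_topologicalClosure _)
    exact le_iSup_of_le C.1 (le_iSup_of_le C.2 (le_iSup_of_le (subset_refl C.1) le_rfl))

lemma qObs_orth (h1 : O1Prop ν) (h3 : O3Prop ν) (X Y : {X : Set ℝ // MeasurableSet X})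
    (h : X.1 ∩ Y.1 = ∅) : OrthoSub (qObs ν X).1 (qObs ν Y).1 := by
  apply orthoSub_of_le_orthogonal
  rw [qObs_val]
  refine Submodule.topologicalClosure_minimal _ ?_ (Submodule.isClosed_orthogonal _)
  refine iSup_le fun D => iSup_le fun hD => iSup_le fun hDY => ?_
  intro z hz
  rw [Submodule.mem_orthogonal]
  intro u hu
  rw [← inner_eq_zero_symm]
  set Kz : Submodule ℂ H := LinearMap.ker (innerSL ℂ z : H →ₗ[ℂ] ℂ) with hKzdef
  have hKzc : IsClosed (Kz : Set H) := ContinuousLinearMap.isClosed_ker _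
  have hker : (qObs ν X).1 ≤ Kz := by
    rw [qObs_val]
    refine Submodule.topologicalClosure_minimal _ ?_ hKzc
    refine iSup_le fun E => iSup_le fun hE => iSup_le fun hEX => ?_
    intro w hw
    rw [hKzdef, LinearMap.mem_ker]
    have hdisj : D ∩ E = ∅ := by
      apply Set.eq_empty_of_subset_empty
      intro t ht
      rw [← h, Set.mem_inter_iff]
      exact ⟨hEX ht.2, hDY ht.1⟩
    exact nu_orth ν h1 h3 ⟨D, hD⟩ ⟨E, hE⟩ hdisj z hz w hw
  have hmem := hker hu
  rw [hKzdef, LinearMap.mem_ker] at hmem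
  exact hmem

lemma qObs_iUnion (h1 : O1Prop ν) (h2 : O2Prop ν) (h3 : O3Prop ν)
    (X : ℕ → {X : Set ℝ // MeasurableSet X}) :
    qObs ν ⟨⋃ n, (X n).1, MeasurableSet.iUnion fun n => (X n).2⟩
      = ⟨(⨆ n, (qObs ν (X n)).1).topologicalClosure,
          Submodule.isClosed_topologicalClosure _⟩ := by
  apply Subtype.ext
  rw [qObs_val]
  apply le_antisymm
  · -- hard direction
    refine Submodule.topologicalClosure_minimal _ ?_
      (Submodule.isClosed_topologicalClosure _)
    refine iSup_le fun C => iSup_le fun hC => iSup_le fun hsub => ?_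
    set T : Submodule ℂ H := (⨆ n, (qObs ν (X n)).1).topologicalClosure with hT
    set Q : ClosedSubspace H := ⟨T, Submodule.isClosed_topologicalClosure _⟩ with hQ
    intro xx hxx
    set x' : H := xx - cproj Q xx with hx'
    have hx'orth : x' ∈ Tᗮ := sub_cproj_mem Q xx
    haveI : IsFiniteMeasure (nuMeas ν h1 h2 h3 x') := nuMeas_isFiniteMeasure ν h1 h2 h3 x'
    have hD0 : ∀ (n : ℕ) (D : Set ℝ) (hD : IsClosed D), D ⊆ (X n).1 →
        nuMeas ν h1 h2 h3 x' D = 0 := by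
      intro n D hD hsub2
      rw [nuMeas_closed ν h1 h2 h3 x' hD]
      have hle : (ν ⟨D, hD⟩).1 ≤ T := by
        refine le_trans ?_ (Submodule.le_topologicalClosure _)
        refine le_trans ?_ (le_iSup (fun n => (qObs ν (X n)).1) n)
        rw [qObs_val]
        refine le_trans ?_ (Submodule.le_topologicalClosure _)
        exact le_iSup_of_le D (le_iSup_of_le hD (le_iSup_of_le hsub2 le_rfl))
      have h0 : cproj (ν ⟨D, hD⟩) x' = 0 :=
        cproj_eq_zero _ (Submodule.orthogonal_le hle hx'orth)
      rw [h0]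
      simp
    have hXn0 : ∀ n, nuMeas ν h1 h2 h3 x' (X n).1 = 0 := by
      intro n
      by_contra hne
      obtain ⟨F, hFsub, hFc, hlt⟩ := MeasurableSet.exists_isClosed_lt_add
        (μ := nuMeas ν h1 h2 h3 x') (X n).2 (measure_ne_top _ _) hne
      rw [hD0 n F hFc hFsub, zero_add] at hlt
      exact lt_irrefl _ hlt
    have hU0 : nuMeas ν h1 h2 h3 x' (⋃ n, (X n).1) = 0 := by
      refine le_antisymm (le_trans (measure_iUnion_le _) ?_) zero_le
      simp [hXn0]
    have hC0 : nuMeas ν h1 h2 h3 x' C = 0 :=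
      le_antisymm (le_trans (measure_mono hsub) hU0.le) zero_le
    have h6 : cproj (ν ⟨C, hC⟩) x' = 0 := by
      rw [nuMeas_closed ν h1 h2 h3 x' hC, ENNReal.ofReal_eq_zero] at hC0
      have h60 : ‖cproj (ν ⟨C, hC⟩) x'‖ = 0 := by
        nlinarith [norm_nonneg (cproj (ν ⟨C, hC⟩) x')]
      exact norm_eq_zero.1 h60
    have h7 : ⟪x', xx⟫_ℂ = 0 := by
      have hxxp : xx = cproj (ν ⟨C, hC⟩) xx := (cproj_eq_self _ hxx).symm
      calc ⟪x', xx⟫_ℂ = ⟪x', cproj (ν ⟨C, hC⟩) xx⟫_ℂ := by rw [← hxxp]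
        _ = ⟪cproj (ν ⟨C, hC⟩) x', xx⟫_ℂ := by
            rw [inner_cproj_left_right, hxxp]
        _ = 0 := by rw [h6, inner_zero_left]
    have h8 : ⟪x', xx⟫_ℂ = ((‖x'‖ : ℂ)) ^ 2 := by
      have hdecomp : xx = cproj Q xx + x' := by
        rw [hx']
        abel
      conv_lhs => rw [hdecomp]
      rw [inner_add_right]
      have hz : ⟪x', cproj Q xx⟫_ℂ = 0 :=
        (Submodule.mem_orthogonal' T x').1 hx'orth (cproj Q xx) (cproj_mem Q xx)
      rw [hz, zero_add, inner_self_eq_norm_sq_to_K]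
      norm_cast
    have hx'0 : x' = 0 := by
      rw [h7] at h8
      have h80 : (‖x'‖ : ℂ) = 0 := by
        exact pow_eq_zero_iff (n := 2) (by norm_num) |>.1 h8.symm
      have : ‖x'‖ = 0 := by exact_mod_cast h80
      exact norm_eq_zero.1 this
    have hfin : xx = cproj Q xx := sub_eq_zero.1 (hx'.symm.trans hx'0)
    rw [hfin]
    exact cproj_mem Q xx
  · -- easy direction
    show (⨆ n, (qObs ν (X n)).1).topologicalClosure
        ≤ (⨆ (C : Set ℝ) (hC : IsClosed C) (_ : C ⊆ ⋃ n, (X n).1),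
            (ν ⟨C, hC⟩).1).topologicalClosure
    refine Submodule.topologicalClosure_minimal _ (iSup_le fun n => ?_)
      (Submodule.isClosed_topologicalClosure _)
    rw [qObs_val]
    apply Submodule.topologicalClosure_mono
    refine iSup_le fun C => iSup_le fun hC => iSup_le fun hs => ?_
    exact le_iSup_of_le C (le_iSup_of_le hC
      (le_iSup_of_le (hs.trans (Set.subset_iUnion (fun n => (X n).1) n)) le_rfl))

end NuLayer

lemma isObservable_compl (o : {X : Set ℝ // MeasurableSet X} → ClosedSubspace H)
    (ho : IsObservable o) {t : Set ℝ} (ht : MeasurableSet t) :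
    (o ⟨tᶜ, ht.compl⟩).1 = ((o ⟨t, ht⟩).1)ᗮ := by
  obtain ⟨hbot, htop, hunion, horth⟩ := ho
  set P := (o ⟨t, ht⟩).1 with hP
  set Q := (o ⟨tᶜ, ht.compl⟩).1 with hQdef
  have hQc : IsClosed (Q : Set H) := (o ⟨tᶜ, ht.compl⟩).2
  have hQP : Q ≤ Pᗮ := by
    have h := horth ⟨t, ht⟩ ⟨tᶜ, ht.compl⟩ (Set.inter_compl_self t)
    intro q hq
    rw [Submodule.mem_orthogonal]
    intro u hu
    exact h u hu q hq
  set Xs : ℕ → {X : Set ℝ // MeasurableSet X} :=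
    fun n => Nat.rec ⟨t, ht⟩ (fun _ _ => ⟨tᶜ, ht.compl⟩) n with hXs
  have hcup : ⋃ n, (Xs n).1 = Set.univ := by
    apply Set.eq_univ_of_univ_subset
    rw [← Set.union_compl_self t]
    refine Set.union_subset ?_ ?_
    · exact Set.subset_iUnion_of_subset 0 subset_rfl
    · exact Set.subset_iUnion_of_subset 1 subset_rfl
  have hu := hunion Xs
  have he : (⟨⋃ n, (Xs n).1, MeasurableSet.iUnion fun n => (Xs n).2⟩ :
      {X : Set ℝ // MeasurableSet X}) = ⟨Set.univ, MeasurableSet.univ⟩ := Subtype.ext hcup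
  rw [he, htop] at hu
  have hsup : (⨆ n, (o (Xs n)).1) = P ⊔ Q := by
    apply le_antisymm
    · refine iSup_le fun n => ?_
      cases n with
      | zero => exact le_sup_left
      | succ n => exact le_sup_right
    · exact sup_le (le_iSup (fun n => (o (Xs n)).1) 0) (le_iSup (fun n => (o (Xs n)).1) 1)
  have hval : (⊤ : Submodule ℂ H) = (P ⊔ Q).topologicalClosure := by
    have := congrArg Subtype.val hu
    simp only [csTop] at this
    rw [hsup] at this
    exact this
  refine le_antisymm hQP ?_
  intro z hz
  have hzT : z ∈ (P ⊔ Q).topologicalClosure := by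
    rw [← hval]
    exact Submodule.mem_top
  set R : ClosedSubspace H := ⟨Pᗮ, Submodule.isClosed_orthogonal _⟩ with hR
  have hcont : Continuous fun w => cproj R w := by
    letI : CompleteSpace R.1 := R.2.completeSpace_coe
    haveI : Submodule.HasOrthogonalProjection R.1 := Submodule.HasOrthogonalProjection.ofCompleteSpace R.1
    exact continuous_subtype_val.comp (R.1.orthogonalProjectionOnto).continuous
  have himg : ∀ w ∈ (P ⊔ Q : Submodule ℂ H), cproj R w ∈ Q := by
    intro w hw
    obtain ⟨p, hp, q, hq, rfl⟩ := Submodule.mem_sup.1 hw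
    rw [cproj_add, cproj_eq_zero R (Submodule.le_orthogonal_orthogonal P hp),
      cproj_eq_self R (hQP hq), zero_add]
    exact hq
  have hmem : z ∈ closure ((P ⊔ Q : Submodule ℂ H) : Set H) := by
    rw [← Submodule.topologicalClosure_coe]
    exact hzT
  have himg2 : cproj R z ∈ Q := by
    have hsub1 : cproj R z ∈ closure ((fun w => cproj R w) '' ((P ⊔ Q : Submodule ℂ H) : Set H)) :=
      image_closure_subset_closure_image hcont ⟨z, hmem, rfl⟩
    have hsub2 : (fun w => cproj R w) '' ((P ⊔ Q : Submodule ℂ H) : Set H) ⊆ (Q : Set H) := by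
      rintro _ ⟨w, hw, rfl⟩
      exact himg w hw
    have hsub3 := closure_mono hsub2 hsub1
    rwa [hQc.closure_eq] at hsub3
  have hzR : cproj R z = z := cproj_eq_self R hz
  rwa [hzR] at himg2

end QV

/-- A quantum valuation on the closed subsets of `ℝ` (conditions (O1), (O2), (O3))
extends uniquely to an observable. -/
theorem quantum_valuation_extends_uniquely_to_observable [TopologicalSpace.SeparableSpace H]
    (hinf : ¬ FiniteDimensional ℂ H)
    (ν : {C : Set ℝ // IsClosed C} → ClosedSubspace H)
    (hO1 : ν ⟨∅, isClosed_empty⟩ = csBot ∧ ν ⟨Set.univ, isClosed_univ⟩ = csTop)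
    (hO2 : ∀ C : ℕ → {C : Set ℝ // IsClosed C}, (∀ n, (C (n + 1)).1 ⊆ (C n).1) →
       ν ⟨⋂ n, (C n).1, isClosed_iInter fun n => (C n).2⟩
         = ⟨⨅ n, (ν (C n)).1, by
             rw [Submodule.coe_iInf]; exact isClosed_iInter fun n => (ν (C n)).2⟩)
    (hO3 : ∀ x : H, ‖x‖ = 1 → ∀ A B : {C : Set ℝ // IsClosed C},
       (⟪x, cproj (ν A) x⟫_ℂ).re + (⟪x, cproj (ν B) x⟫_ℂ).re
       = (⟪x, cproj (ν ⟨A.1 ∪ B.1, A.2.union B.2⟩) x⟫_ℂ).re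
         + (⟪x, cproj (ν ⟨A.1 ∩ B.1, A.2.inter B.2⟩) x⟫_ℂ).re) :
    ∃! o : {X : Set ℝ // MeasurableSet X} → ClosedSubspace H,
      IsObservable o ∧
      ∀ C : {C : Set ℝ // IsClosed C}, o ⟨C.1, C.2.measurableSet⟩ = ν C := by
  classical
  have h1 : QV.O1Prop ν := hO1
  have h2 : QV.O2Prop ν := hO2
  have h3 : QV.O3Prop ν := hO3
  have hobs : IsObservable (QV.qObs ν) := by
    refine ⟨?_, ?_, ?_, ?_⟩
    · exact (QV.qObs_closed ν h2 ⟨∅, isClosed_empty⟩).trans h1.1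
    · exact (QV.qObs_closed ν h2 ⟨Set.univ, isClosed_univ⟩).trans h1.2
    · exact QV.qObs_iUnion ν h1 h2 h3
    · exact QV.qObs_orth ν h1 h3
  refine ⟨QV.qObs ν, ⟨hobs, fun C => QV.qObs_closed ν h2 C⟩, ?_⟩
  rintro o' ⟨ho', hext⟩
  funext X
  obtain ⟨Xs, hXs⟩ := X
  have key : ∀ ⦃t : Set ℝ⦄, MeasurableSet t →
      ∀ h : MeasurableSet t, o' ⟨t, h⟩ = QV.qObs ν ⟨t, h⟩ := by
    refine MeasurableSpace.induction_on_inter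
      (C := fun t _ => ∀ h : MeasurableSet t, o' ⟨t, h⟩ = QV.qObs ν ⟨t, h⟩)
      (s := {C : Set ℝ | IsClosed C}) ?_ ?_ ?_ ?_ ?_ ?_
    · exact borel_eq_generateFrom_isClosed
    · intro s hs t ht _
      exact hs.inter ht
    · intro h
      exact ho'.1.trans ((QV.qObs_closed ν h2 ⟨∅, isClosed_empty⟩).trans h1.1).symm
    · intro t htc h
      exact (hext ⟨t, htc⟩).trans (QV.qObs_closed ν h2 ⟨t, htc⟩).symm
    · intro t htm IH h
      have hIH : (o' ⟨t, htm⟩).1 = (QV.qObs ν ⟨t, htm⟩).1 :=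
        congrArg Subtype.val (IH htm)
      apply Subtype.ext
      show (o' ⟨tᶜ, htm.compl⟩).1 = (QV.qObs ν ⟨tᶜ, htm.compl⟩).1
      rw [QV.isObservable_compl o' ho' htm, QV.isObservable_compl (QV.qObs ν) hobs htm, hIH]
    · intro f _ hf hIH h
      have hIH' : (fun n => (o' ⟨f n, hf n⟩).1) = fun n => (QV.qObs ν ⟨f n, hf n⟩).1 :=
        funext fun n => congrArg Subtype.val (hIH n (hf n))
      have hu1 := ho'.2.2.1 fun n => ⟨f n, hf n⟩
      have hu2 := hobs.2.2.1 fun n => ⟨f n, hf n⟩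
      have hmid : (⟨(⨆ n, (o' ⟨f n, hf n⟩).1).topologicalClosure,
            Submodule.isClosed_topologicalClosure _⟩ : ClosedSubspace H)
          = ⟨(⨆ n, (QV.qObs ν ⟨f n, hf n⟩).1).topologicalClosure,
            Submodule.isClosed_topologicalClosure _⟩ := by
        apply Subtype.ext
        show (⨆ n, (o' ⟨f n, hf n⟩).1).topologicalClosure
          = (⨆ n, (QV.qObs ν ⟨f n, hf n⟩).1).topologicalClosure
        exact congrArg (fun g : ℕ → Submodule ℂ H => (⨆ n, g n).topologicalClosure) hIH'
      exact hu1.trans (hmid.trans hu2.symm)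
  exact key hXs hXs
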